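/- For the diameter gadget (G,w): if F(x,y)=1 then D_{G,w} ≤ max{2α, β} + n, and if F(x,y)=0 then D_{G,w} ≥ min{α+β, 3α}. -/

import Mathlib

open scoped ENNReal

set_option linter.unusedVariables false

/-- The length of a walk with respect to `ℝ≥0∞` edge weights. -/
noncomputable def wlen {V : Type*} (G : SimpleGraph V) (w : V → V → ℝ≥0∞) {u v : V}
    (p : G.Walk u v) : ℝ≥0∞ :=
  (p.darts.map fun d => w d.toProd.1 d.toProd.2).sum

/-- The weighted distance: the infimum of walk lengths. -/
noncomputable def wdist {V : Type*} (G : SimpleGraph V) (w : V → V → ℝ≥0∞) (u v : V) : ℝ≥0∞ :=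
  ⨅ p : G.Walk u v, wlen G w p

/-- Weighted diameter `D_{G,w} = max_{u,v} d_{G,w}(u,v)`. -/
noncomputable def wdiam {V : Type*} (G : SimpleGraph V) (w : V → V → ℝ≥0∞) : ℝ≥0∞ :=
  ⨆ u, ⨆ v, wdist G w u v

/-- Vertices of the diameter gadget. -/
inductive GV (h s ℓ : ℕ) where
  /-- tree node `t_{i,j}` encoded in heap order: `t m` is the tree node numbered `m+1`,
  i.e. the node of depth `i` and position `j` with `m + 1 = 2^i + (j-1)`. -/
  | t (m : Fin (2 ^ (h + 1) - 1))
  /-- path node `p_{i+1, j+1}` -/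
  | p (i : Fin (2 * s + ℓ)) (j : Fin (2 ^ h))
  /-- node `a_{i+1}` -/
  | a (i : Fin (2 ^ s))
  /-- node `b_{i+1}` -/
  | b (i : Fin (2 ^ s))
  /-- node `a^z_{j+1}` -/
  | ah (z : Bool) (j : Fin s)
  /-- node `b^z_{j+1}` -/
  | bh (z : Bool) (j : Fin s)
  /-- node `a*_{j+1}` -/
  | as (j : Fin ℓ)
  /-- node `b*_{j+1}` -/
  | bs (j : Fin ℓ)
  deriving DecidableEq, Fintype

/-- Base (oriented) adjacency of the diameter gadget.  Here `bin(i,j)` is realized as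
`Nat.testBit` on the 0-based index. -/
def gadgetAdj0 {h s ℓ : ℕ} : GV h s ℓ → GV h s ℓ → Prop
  | .t m, .t m' => 1 ≤ m.val ∧ m'.val + 1 = (m.val + 1) / 2
  | .t m, .p _ j => m.val + 1 = 2 ^ h + j.val
  | .p i j, .p i' j' => i = i' ∧ j.val = j'.val + 1
  | .ah z jj, .p i j => i.val = 2 * jj.val + (if z then 1 else 0) ∧ j.val = 0
  | .bh z jj, .p i j => i.val = 2 * jj.val + (if z then 0 else 1) ∧ j.val = 2 ^ h - 1
  | .as jj, .p i j => i.val = 2 * s + jj.val ∧ j.val = 0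
  | .bs jj, .p i j => i.val = 2 * s + jj.val ∧ j.val = 2 ^ h - 1
  | .a i, .ah z j => z = i.val.testBit j.val
  | .b i, .bh z j => z = i.val.testBit j.val
  | .a i, .a i' => i ≠ i'
  | .b i, .b i' => i ≠ i'
  | .a _, .as _ => True
  | .b _, .bs _ => True
  | _, _ => False

/-- The diameter gadget graph. -/
def gadget (h s ℓ : ℕ) : SimpleGraph (GV h s ℓ) where
  Adj u v := u ≠ v ∧ (gadgetAdj0 u v ∨ gadgetAdj0 v u)
  symm := ⟨fun u v huv => ⟨huv.1.symm, huv.2.symm⟩⟩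
  loopless := ⟨fun u hu => hu.1 rfl⟩

/-- The weights of the diameter gadget: tree edges, path edges and the attachment edges of
`a^z_j, b^z_j, a*_j, b*_j` to the paths have weight `1`; leaf–path edges, `a_i`–`a^{bin(i,j)}_j`,
`b_i`–`b^{bin(i,j)}_j` edges and clique edges have weight `α`; `a_i`–`a*_j` has weight `α` if
`x_{i,j}=1` and `β` otherwise, and similarly `b_i`–`b*_j` according to `y`. -/
def gadgetW {h s ℓ : ℕ} (x y : Fin (2 ^ s) → Fin ℓ → Bool) (α β : ℕ) :
    GV h s ℓ → GV h s ℓ → ℕ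
  | .a i, .as j => if x i j then α else β
  | .as j, .a i => if x i j then α else β
  | .b i, .bs j => if y i j then α else β
  | .bs j, .b i => if y i j then α else β
  | .t _, .p _ _ => α
  | .p _ _, .t _ => α
  | .a _, .ah _ _ => α
  | .ah _ _, .a _ => α
  | .b _, .bh _ _ => α
  | .bh _ _, .b _ => α
  | .a _, .a _ => α
  | .b _, .b _ => α
  | _, _ => 1

section Basic
variable {V : Type*} (G : SimpleGraph V) (w : V → V → ℝ≥0∞)

lemma wlen_nil {u : V} : wlen G w (SimpleGraph.Walk.nil : G.Walk u u) = 0 := rfl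

lemma wlen_cons {u v z : V} (huv : G.Adj u v) (p : G.Walk v z) :
    wlen G w (SimpleGraph.Walk.cons huv p) = w u v + wlen G w p := by
  simp [wlen]

lemma wlen_append {u v z : V} (p : G.Walk u v) (q : G.Walk v z) :
    wlen G w (p.append q) = wlen G w p + wlen G w q := by
  simp [wlen, SimpleGraph.Walk.darts_append]

lemma wdist_le_wlen {u v : V} (p : G.Walk u v) : wdist G w u v ≤ wlen G w p :=
  iInf_le _ p

lemma wdist_self_le {u : V} : wdist G w u u ≤ 0 :=
  (wdist_le_wlen G w SimpleGraph.Walk.nil).trans_eq (wlen_nil G w)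

lemma wdist_le_adj {u v : V} (huv : G.Adj u v) : wdist G w u v ≤ w u v := by
  refine (wdist_le_wlen G w (SimpleGraph.Walk.cons huv SimpleGraph.Walk.nil)).trans_eq ?_
  simp [wlen_cons, wlen_nil]

lemma wdist_triangle (u v z : V) : wdist G w u z ≤ wdist G w u v + wdist G w v z := by
  rw [wdist, wdist, ENNReal.iInf_add]
  refine le_iInf fun p => ?_
  conv_rhs => rw [wdist, ENNReal.add_iInf]
  refine le_iInf fun q => ?_
  exact (wdist_le_wlen G w (p.append q)).trans_eq (wlen_append G w p q)

lemma wlen_reverse (hw : ∀ a b, w a b = w b a) {u v : V} (p : G.Walk u v) :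
    wlen G w p.reverse = wlen G w p := by
  rw [wlen, wlen, SimpleGraph.Walk.darts_reverse, List.map_reverse, List.sum_reverse,
    List.map_map]
  congr 1
  refine List.map_congr_left fun d hd => ?_
  simp [SimpleGraph.Dart.symm, hw d.toProd.1 d.toProd.2]

lemma wdist_symm (hw : ∀ a b, w a b = w b a) (u v : V) :
    wdist G w u v = wdist G w v u := by
  have key : ∀ a b : V, wdist G w a b ≤ wdist G w b a := fun a b =>
    le_iInf fun q => (wdist_le_wlen G w q.reverse).trans_eq (wlen_reverse G w hw q)
  exact le_antisymm (key u v) (key v u)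

lemma wdiam_le (c : ℝ≥0∞) (hc : ∀ u v : V, wdist G w u v ≤ c) : wdiam G w ≤ c :=
  iSup_le fun u => iSup_le fun v => hc u v

lemma le_wdiam (u v : V) : wdist G w u v ≤ wdiam G w :=
  le_iSup_of_le u (le_iSup_of_le v le_rfl)

end Basic

namespace S3

variable {h s ℓ : ℕ}

/-- the weight function as `ℝ≥0∞`. -/
noncomputable def Wc (x y : Fin (2^s) → Fin ℓ → Bool) (α β : ℕ) :
    GV h s ℓ → GV h s ℓ → ℝ≥0∞ :=
  fun u v => ((gadgetW x y α β u v : ℕ) : ℝ≥0∞)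

/-- the distance in the gadget. -/
noncomputable def dd (x y : Fin (2^s) → Fin ℓ → Bool) (α β : ℕ) (u v : GV h s ℓ) : ℝ≥0∞ :=
  wdist (gadget h s ℓ) (Wc x y α β) u v

variable (x y : Fin (2^s) → Fin ℓ → Bool) (α β : ℕ)

lemma Wc_symm : ∀ u v : GV h s ℓ, Wc x y α β u v = Wc x y α β v u := by
  intro u v
  cases u <;> cases v <;> rfl

lemma dd_symm (u v : GV h s ℓ) : dd (h := h) x y α β u v = dd (h := h) x y α β v u :=
  wdist_symm _ _ (Wc_symm x y α β) u v

lemma dd_self (u : GV h s ℓ) (c : ℕ) : dd (h := h) x y α β u u ≤ (c : ℝ≥0∞) :=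
  (wdist_self_le _ _).trans zero_le

lemma chain {u v w : GV h s ℓ} {c1 c2 : ℕ} (h1 : dd (h := h) x y α β u w ≤ (c1 : ℝ≥0∞))
    (h2 : dd (h := h) x y α β w v ≤ (c2 : ℝ≥0∞)) : dd (h := h) x y α β u v ≤ ((c1 + c2 : ℕ) : ℝ≥0∞) := by
  push_cast
  exact (wdist_triangle _ _ u w v).trans (add_le_add h1 h2)

lemma dd_mono {u v : GV h s ℓ} {c c' : ℕ} (h1 : dd (h := h) x y α β u v ≤ (c : ℝ≥0∞))
    (hcc : c ≤ c') : dd (h := h) x y α β u v ≤ (c' : ℝ≥0∞) :=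
  h1.trans (Nat.cast_le.mpr hcc)

lemma dd_adj {u v : GV h s ℓ} (hne : u ≠ v) (ha : gadgetAdj0 u v ∨ gadgetAdj0 v u)
    {c : ℕ} (hc : gadgetW x y α β u v ≤ c) : dd (h := h) x y α β u v ≤ (c : ℝ≥0∞) :=
  dd_mono x y α β (wdist_le_adj _ _ (And.intro hne ha)) hc

/-! vertex builders -/

def P0 (r : Fin (2*s+ℓ)) : GV h s ℓ := .p r ⟨0, Nat.two_pow_pos h⟩

def PL (r : Fin (2*s+ℓ)) : GV h s ℓ :=
  .p r ⟨2^h - 1, by have := Nat.two_pow_pos h; omega⟩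

def root : GV h s ℓ :=
  .t ⟨0, by have : (1:ℕ) < 2^(h+1) := Nat.one_lt_two_pow_iff.mpr (by omega); omega⟩

def leaf (k : ℕ) (hk : k < 2^h) : GV h s ℓ :=
  .t ⟨2^h - 1 + k, by
    have h1 := Nat.two_pow_pos h
    have h2 : (2:ℕ)^(h+1) = 2 * 2^h := by ring
    omega⟩

def rowA (z : Bool) (jj : Fin s) : Fin (2*s+ℓ) :=
  ⟨2 * jj.val + (if z then 1 else 0), by have := jj.isLt; split <;> omega⟩

def rowB (z : Bool) (jj : Fin s) : Fin (2*s+ℓ) :=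
  ⟨2 * jj.val + (if z then 0 else 1), by have := jj.isLt; split <;> omega⟩

def rowS (j : Fin ℓ) : Fin (2*s+ℓ) :=
  ⟨2 * s + j.val, by have := j.isLt; omega⟩

/-! elementary distance bounds -/

lemma dd_p_P0 (r : Fin (2*s+ℓ)) : ∀ (k : ℕ) (hk : k < 2^h),
    dd (h := h) x y α β (.p r ⟨k, hk⟩) (P0 r) ≤ (k : ℝ≥0∞) := by
  intro k
  induction k with
  | zero => intro hk; exact dd_self x y α β _ 0
  | succ n ih =>
    intro hk
    have step : dd (h := h) x y α β (.p r ⟨n+1, hk⟩) (.p r ⟨n, by omega⟩) ≤ ((1:ℕ) : ℝ≥0∞) := by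
      refine dd_adj x y α β ?_ (Or.inl ?_) (le_refl 1)
      · simp [Fin.ext_iff]
      · exact ⟨rfl, rfl⟩
    have := chain x y α β step (ih (by omega))
    exact dd_mono x y α β this (by omega)

lemma R_p (r : Fin (2*s+ℓ)) (j : Fin (2^h)) :
    dd (h := h) x y α β (.p r j) (P0 r) ≤ ((2^h : ℕ) : ℝ≥0∞) := by
  have := dd_p_P0 (h := h) x y α β r j.val j.isLt
  exact dd_mono x y α β (by simpa using this) (by have := j.isLt; omega)

lemma dd_PL_P0 (r : Fin (2*s+ℓ)) :
    dd (h := h) x y α β (PL r) (P0 r) ≤ ((2^h - 1 : ℕ) : ℝ≥0∞) :=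
  dd_p_P0 (h := h) x y α β r _ _

lemma E_ah (z : Bool) (jj : Fin s) :
    dd (h := h) x y α β (.ah z jj) (P0 (rowA z jj)) ≤ ((1:ℕ) : ℝ≥0∞) := by
  refine dd_adj x y α β (by simp [P0, PL]) (Or.inl ?_) (le_refl 1)
  exact ⟨rfl, rfl⟩

lemma E_bh (z : Bool) (jj : Fin s) :
    dd (h := h) x y α β (.bh z jj) (PL (rowB z jj)) ≤ ((1:ℕ) : ℝ≥0∞) := by
  refine dd_adj x y α β (by simp [P0, PL]) (Or.inl ?_) (le_refl 1)
  exact ⟨rfl, rfl⟩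

lemma E_as (j : Fin ℓ) :
    dd (h := h) x y α β (.as j) (P0 (rowS j)) ≤ ((1:ℕ) : ℝ≥0∞) := by
  refine dd_adj x y α β (by simp [P0, PL]) (Or.inl ?_) (le_refl 1)
  exact ⟨rfl, rfl⟩

lemma E_bs (j : Fin ℓ) :
    dd (h := h) x y α β (.bs j) (PL (rowS j)) ≤ ((1:ℕ) : ℝ≥0∞) := by
  refine dd_adj x y α β (by simp [P0, PL]) (Or.inl ?_) (le_refl 1)
  exact ⟨rfl, rfl⟩

lemma R_ah (z : Bool) (jj : Fin s) :
    dd (h := h) x y α β (.ah z jj) (P0 (rowA z jj)) ≤ ((2^h : ℕ) : ℝ≥0∞) :=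
  dd_mono x y α β (E_ah (h := h) x y α β z jj) (Nat.one_le_two_pow)

lemma R_as (j : Fin ℓ) :
    dd (h := h) x y α β (.as j) (P0 (rowS j)) ≤ ((2^h : ℕ) : ℝ≥0∞) :=
  dd_mono x y α β (E_as (h := h) x y α β j) (Nat.one_le_two_pow)

lemma R_bh (z : Bool) (jj : Fin s) :
    dd (h := h) x y α β (.bh z jj) (P0 (rowB z jj)) ≤ ((2^h : ℕ) : ℝ≥0∞) := by
  have := chain x y α β (E_bh (h := h) x y α β z jj) (dd_PL_P0 (h := h) x y α β (rowB z jj))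
  exact dd_mono x y α β this (by have := Nat.one_le_two_pow (n := h); omega)

lemma R_bs (j : Fin ℓ) :
    dd (h := h) x y α β (.bs j) (P0 (rowS j)) ≤ ((2^h : ℕ) : ℝ≥0∞) := by
  have := chain x y α β (E_bs (h := h) x y α β j) (dd_PL_P0 (h := h) x y α β (rowS j))
  exact dd_mono x y α β this (by have := Nat.one_le_two_pow (n := h); omega)

lemma E_leafp (r : Fin (2*s+ℓ)) (j : Fin (2^h)) :
    dd (h := h) x y α β (leaf j.val j.isLt) (.p r j) ≤ (α : ℝ≥0∞) := by
  refine dd_adj x y α β (by simp [leaf]) (Or.inl ?_) (le_refl α)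
  show (2^h - 1 + j.val) + 1 = 2^h + j.val
  have := Nat.one_le_two_pow (n := h)
  omega

lemma E_cross (r r' : Fin (2*s+ℓ)) :
    dd (h := h) x y α β (P0 r) (P0 r') ≤ ((2*α : ℕ) : ℝ≥0∞) := by
  have h1 : dd (h := h) x y α β (P0 r) (leaf 0 (Nat.two_pow_pos h)) ≤ (α : ℝ≥0∞) := by
    rw [dd_symm]
    exact E_leafp (h := h) x y α β r ⟨0, _⟩
  have h2 := E_leafp (h := h) x y α β (j := ⟨0, Nat.two_pow_pos h⟩) r'
  have := chain x y α β h1 h2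
  exact dd_mono x y α β this (by omega)

end S3

namespace S3
variable {h s ℓ : ℕ} (x y : Fin (2^s) → Fin ℓ → Bool) (α β : ℕ)

lemma dd_t_root_aux : ∀ (k : ℕ) (m : Fin (2^(h+1)-1)), m.val + 1 < 2^(k+1) →
    dd (h := h) x y α β (.t m) root ≤ (k : ℝ≥0∞) := by
  intro k
  induction k with
  | zero =>
    intro m hm
    have hm0 : m.val = 0 := by omega
    have : (GV.t m : GV h s ℓ) = root := congrArg _ (Fin.ext hm0)
    rw [this]
    exact dd_self x y α β _ 0
  | succ k ih =>
    intro m hm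
    by_cases h0 : m.val = 0
    · have : (GV.t m : GV h s ℓ) = root := congrArg _ (Fin.ext h0)
      rw [this]
      exact dd_self x y α β _ (k+1)
    · have hparlt : (m.val + 1) / 2 - 1 < 2^(h+1) - 1 := by
        have := m.isLt
        omega
      set pm : Fin (2^(h+1)-1) := ⟨(m.val + 1) / 2 - 1, hparlt⟩ with hpm
      have step : dd (h := h) x y α β (.t m) (.t pm) ≤ ((1:ℕ) : ℝ≥0∞) := by
        refine dd_adj x y α β ?_ (Or.inl ?_) (le_refl 1)
        · simp only [ne_eq, GV.t.injEq, Fin.ext_iff, hpm]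
          omega
        · refine ⟨by omega, ?_⟩
          show (m.val + 1) / 2 - 1 + 1 = (m.val + 1) / 2
          omega
      have hrec : pm.val + 1 < 2^(k+1) := by
        have hp2 : (2:ℕ)^(k+2) = 2 * 2^(k+1) := by ring
        simp only [hpm]
        omega
      have := chain x y α β step (ih pm hrec)
      exact dd_mono x y α β this (by omega)

lemma dd_t_root (m : Fin (2^(h+1)-1)) :
    dd (h := h) x y α β (.t m) root ≤ (h : ℝ≥0∞) := by
  refine dd_t_root_aux x y α β h m ?_
  have := m.isLt
  omega

lemma dd_root_leaf (k : ℕ) (hk : k < 2^h) :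
    dd (h := h) x y α β root (leaf k hk) ≤ (h : ℝ≥0∞) := by
  rw [dd_symm]
  refine dd_t_root_aux x y α β h _ ?_
  show 2^h - 1 + k + 1 < 2^(h+1)
  have hp2 : (2:ℕ)^(h+1) = 2 * 2^h := by ring
  have := Nat.one_le_two_pow (n := h)
  omega

lemma dd_root_P0 (r : Fin (2*s+ℓ)) :
    dd (h := h) x y α β root (P0 r) ≤ ((h + α : ℕ) : ℝ≥0∞) := by
  have h2 := E_leafp (h := h) x y α β (j := ⟨0, Nat.two_pow_pos h⟩) r
  exact chain x y α β (dd_root_leaf x y α β 0 _) h2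

/-! a/b cluster edges -/

lemma E_a_ah (i : Fin (2^s)) (jj : Fin s) :
    dd (h := h) x y α β (.a i) (.ah (i.val.testBit jj.val) jj) ≤ (α : ℝ≥0∞) := by
  refine dd_adj x y α β (by simp) (Or.inl ?_) (le_refl α)
  exact rfl

lemma E_b_bh (i : Fin (2^s)) (jj : Fin s) :
    dd (h := h) x y α β (.b i) (.bh (i.val.testBit jj.val) jj) ≤ (α : ℝ≥0∞) := by
  refine dd_adj x y α β (by simp) (Or.inl ?_) (le_refl α)
  exact rfl

lemma E_aa (i i' : Fin (2^s)) : dd (h := h) x y α β (.a i) (.a i') ≤ (α : ℝ≥0∞) := by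
  by_cases hii : i = i'
  · subst hii; exact dd_self x y α β _ α
  · refine dd_adj x y α β (by simp [hii]) (Or.inl ?_) (le_refl α)
    exact hii

lemma E_bb (i i' : Fin (2^s)) : dd (h := h) x y α β (.b i) (.b i') ≤ (α : ℝ≥0∞) := by
  by_cases hii : i = i'
  · subst hii; exact dd_self x y α β _ α
  · refine dd_adj x y α β (by simp [hii]) (Or.inl ?_) (le_refl α)
    exact hii

lemma E_a_as (hab : α ≤ β) (i : Fin (2^s)) (j : Fin ℓ) :
    dd (h := h) x y α β (.a i) (.as j) ≤ (β : ℝ≥0∞) := by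
  refine dd_adj x y α β (by simp) (Or.inl ?_) ?_
  · exact trivial
  · show (if x i j then α else β) ≤ β
    split <;> omega

lemma E_a_as' (i : Fin (2^s)) (j : Fin ℓ) (hx : x i j = true) :
    dd (h := h) x y α β (.a i) (.as j) ≤ (α : ℝ≥0∞) := by
  refine dd_adj x y α β (by simp) (Or.inl ?_) ?_
  · exact trivial
  · show (if x i j then α else β) ≤ α
    simp [hx]

lemma E_b_bs (hab : α ≤ β) (i : Fin (2^s)) (j : Fin ℓ) :
    dd (h := h) x y α β (.b i) (.bs j) ≤ (β : ℝ≥0∞) := by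
  refine dd_adj x y α β (by simp) (Or.inl ?_) ?_
  · exact trivial
  · show (if y i j then α else β) ≤ β
    split <;> omega

lemma E_b_bs' (i : Fin (2^s)) (j : Fin ℓ) (hy : y i j = true) :
    dd (h := h) x y α β (.b i) (.bs j) ≤ (α : ℝ≥0∞) := by
  refine dd_adj x y α β (by simp) (Or.inl ?_) ?_
  · exact trivial
  · show (if y i j then α else β) ≤ α
    simp [hy]

end S3

namespace S3
variable {h s ℓ : ℕ} (x y : Fin (2^s) → Fin ℓ → Bool) (α β : ℕ)

lemma dd_symm_le {u v : GV h s ℓ} {c : ℝ≥0∞} (h1 : dd (h := h) x y α β u v ≤ c) :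
    dd (h := h) x y α β v u ≤ c :=
  (dd_symm x y α β v u).trans_le h1

lemma exists_diffbit (i i' : Fin (2^s)) (hne : i ≠ i') :
    ∃ jj : Fin s, i.val.testBit jj.val ≠ i'.val.testBit jj.val := by
  by_contra hc
  push_neg at hc
  apply hne
  apply Fin.ext
  apply Nat.eq_of_testBit_eq
  intro n
  by_cases hn : n < s
  · exact hc ⟨n, hn⟩
  · rw [Nat.testBit_lt_two_pow, Nat.testBit_lt_two_pow]
    · exact lt_of_lt_of_le i'.isLt (Nat.pow_le_pow_right (by norm_num) (by omega))
    · exact lt_of_lt_of_le i.isLt (Nat.pow_le_pow_right (by norm_num) (by omega))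

lemma flipbit (i : Fin (2^s)) (jj : Fin s) :
    ∃ i' : Fin (2^s), i' ≠ i ∧ i'.val.testBit jj.val = !(i.val.testBit jj.val) := by
  have hlt : i.val ^^^ 2^jj.val < 2^s :=
    Nat.xor_lt_two_pow i.isLt (Nat.pow_lt_pow_right (by norm_num) jj.isLt)
  refine ⟨⟨i.val ^^^ 2^jj.val, hlt⟩, ?_, ?_⟩
  · intro e
    have hv : i.val ^^^ 2^jj.val = i.val := congrArg Fin.val e
    have : (i.val ^^^ 2^jj.val).testBit jj.val = i.val.testBit jj.val := by
      rw [hv]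
    rw [Nat.testBit_xor, Nat.testBit_two_pow_self] at this
    cases hb : i.val.testBit jj.val <;> rw [hb] at this <;> simp at this
  · show (i.val ^^^ 2^jj.val).testBit jj.val = _
    rw [Nat.testBit_xor, Nat.testBit_two_pow_self]
    cases i.val.testBit jj.val <;> rfl

lemma S_a (hs : 1 ≤ s) (hab : α ≤ β) (i : Fin (2^s)) (r : Fin (2*s+ℓ)) :
    dd (h := h) x y α β (.a i) (P0 r) ≤ ((max (2*α) β + 1 : ℕ) : ℝ≥0∞) := by
  have hml := le_max_left (2*α) β
  have hmr := le_max_right (2*α) β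
  by_cases hr : r.val < 2*s
  · have hjj : r.val / 2 < s := by omega
    set jj : Fin s := ⟨r.val / 2, hjj⟩ with hjjdef
    set z : Bool := decide (r.val % 2 = 1) with hzdef
    have hrow : r = rowA z jj := by
      apply Fin.ext
      show r.val = 2 * (r.val/2) + (if z then 1 else 0)
      by_cases h1 : r.val % 2 = 1 <;> simp [hzdef, h1] <;> omega
    rw [hrow]
    by_cases hbit : i.val.testBit jj.val = z
    · have e1 := E_a_ah (h := h) x y α β i jj
      rw [hbit] at e1
      have := chain x y α β e1 (E_ah (h := h) x y α β z jj)
      exact dd_mono x y α β this (by omega)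
    · obtain ⟨i', hne, hbit'⟩ := flipbit (s := s) i jj
      have hz : i'.val.testBit jj.val = z := by
        rw [hbit']
        cases hb : i.val.testBit jj.val <;> cases hzz : z <;>
          first
          | rfl
          | (exfalso; rw [hb, hzz] at hbit; exact hbit rfl)
      have e1 := E_aa (h := h) x y α β i i'
      have e2 := E_a_ah (h := h) x y α β i' jj
      rw [hz] at e2
      have := chain x y α β (chain x y α β e1 e2) (E_ah (h := h) x y α β z jj)
      exact dd_mono x y α β this (by omega)
  · have hj : r.val - 2*s < ℓ := by have := r.isLt; omega
    set j : Fin ℓ := ⟨r.val - 2*s, hj⟩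
    have hrow : r = rowS j := by
      apply Fin.ext
      show r.val = 2*s + (r.val - 2*s)
      omega
    rw [hrow]
    have := chain x y α β (E_a_as (h := h) x y α β hab i j) (E_as (h := h) x y α β j)
    exact dd_mono x y α β this (by omega)

lemma S_b (hs : 1 ≤ s) (hab : α ≤ β) (i : Fin (2^s)) (r : Fin (2*s+ℓ)) :
    dd (h := h) x y α β (.b i) (P0 r) ≤ ((max (2*α) β + 2^h : ℕ) : ℝ≥0∞) := by
  have hml := le_max_left (2*α) β
  have hmr := le_max_right (2*α) β
  have h1p := Nat.one_le_two_pow (n := h)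
  by_cases hr : r.val < 2*s
  · have hjj : r.val / 2 < s := by omega
    set jj : Fin s := ⟨r.val / 2, hjj⟩ with hjjdef
    set z : Bool := decide (r.val % 2 = 0) with hzdef
    have hrow : r = rowB z jj := by
      apply Fin.ext
      show r.val = 2 * (r.val/2) + (if z then 0 else 1)
      by_cases h1 : r.val % 2 = 0 <;> simp [hzdef, h1] <;> omega
    rw [hrow]
    have tail := chain x y α β (E_bh (h := h) x y α β z jj) (dd_PL_P0 (h := h) x y α β (rowB z jj))
    by_cases hbit : i.val.testBit jj.val = z
    · have e1 := E_b_bh (h := h) x y α β i jj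
      rw [hbit] at e1
      have := chain x y α β e1 tail
      exact dd_mono x y α β this (by omega)
    · obtain ⟨i', hne, hbit'⟩ := flipbit (s := s) i jj
      have hz : i'.val.testBit jj.val = z := by
        rw [hbit']
        cases hb : i.val.testBit jj.val <;> cases hzz : z <;>
          first
          | rfl
          | (exfalso; rw [hb, hzz] at hbit; exact hbit rfl)
      have e1 := E_bb (h := h) x y α β i i'
      have e2 := E_b_bh (h := h) x y α β i' jj
      rw [hz] at e2
      have := chain x y α β (chain x y α β e1 e2) tail
      exact dd_mono x y α β this (by omega)
  · have hj : r.val - 2*s < ℓ := by have := r.isLt; omega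
    set j : Fin ℓ := ⟨r.val - 2*s, hj⟩
    have hrow : r = rowS j := by
      apply Fin.ext
      show r.val = 2*s + (r.val - 2*s)
      omega
    rw [hrow]
    have := chain x y α β (chain x y α β (E_b_bs (h := h) x y α β hab i j)
      (E_bs (h := h) x y α β j)) (dd_PL_P0 (h := h) x y α β (rowS j))
    exact dd_mono x y α β this (by omega)

lemma D_ab (hF : ∀ i : Fin (2^s), ∃ j : Fin ℓ, x i j = true ∧ y i j = true)
    (i i' : Fin (2^s)) :
    dd (h := h) x y α β (.a i) (.b i') ≤ ((2*α + 2^h + 1 : ℕ) : ℝ≥0∞) := by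
  have h1p := Nat.one_le_two_pow (n := h)
  by_cases hii : i = i'
  · subst hii
    obtain ⟨j, hxj, hyj⟩ := hF i
    have e1 := E_a_as' (h := h) x y α β i j hxj
    have e2 := E_as (h := h) x y α β j
    have e3 := dd_symm_le x y α β (dd_PL_P0 (h := h) x y α β (rowS j))
    have e4 := dd_symm_le x y α β (E_bs (h := h) x y α β j)
    have e5 := dd_symm_le x y α β (E_b_bs' (h := h) x y α β i j hyj)
    have := chain x y α β (chain x y α β (chain x y α β (chain x y α β e1 e2) e3) e4) e5
    exact dd_mono x y α β this (by omega)
  · obtain ⟨jj, hdiff⟩ := exists_diffbit (s := s) i i' hii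
    set z : Bool := i.val.testBit jj.val with hzdef
    have hroweq : (rowB (!z) jj : Fin (2*s+ℓ)) = rowA z jj := by
      apply Fin.ext
      show 2 * jj.val + (if !z then 0 else 1) = 2 * jj.val + (if z then 1 else 0)
      cases z <;> rfl
    have e1 := E_a_ah (h := h) x y α β i jj
    have e2 := E_ah (h := h) x y α β z jj
    have e3 := dd_symm_le x y α β (dd_PL_P0 (h := h) x y α β (rowA z jj))
    have e4' := E_bh (h := h) x y α β (!z) jj
    rw [hroweq] at e4'
    have e4 := dd_symm_le x y α β e4'
    have hz' : i'.val.testBit jj.val = !z := by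
      cases hb : i'.val.testBit jj.val <;> cases hzz : z <;>
        first
        | rfl
        | (exfalso; rw [hb, hzz] at hdiff; exact hdiff rfl)
    have e5' := E_b_bh (h := h) x y α β i' jj
    rw [hz'] at e5'
    have e5 := dd_symm_le x y α β e5'
    have := chain x y α β (chain x y α β (chain x y α β (chain x y α β e1 e2) e3) e4) e5
    exact dd_mono x y α β this (by omega)

lemma A_anchor (hs : 1 ≤ s) (i : Fin (2^s)) :
    dd (h := h) x y α β (.a i) (P0 (rowA (i.val.testBit 0) ⟨0, hs⟩)) ≤
      ((α + 1 : ℕ) : ℝ≥0∞) :=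
  chain x y α β (E_a_ah (h := h) x y α β i ⟨0, hs⟩) (E_ah (h := h) x y α β _ ⟨0, hs⟩)

lemma B_anchor (hs : 1 ≤ s) (i : Fin (2^s)) :
    dd (h := h) x y α β (.b i) (P0 (rowB (i.val.testBit 0) ⟨0, hs⟩)) ≤
      ((α + 2^h : ℕ) : ℝ≥0∞) := by
  have h1p := Nat.one_le_two_pow (n := h)
  have := chain x y α β (chain x y α β (E_b_bh (h := h) x y α β i ⟨0, hs⟩)
    (E_bh (h := h) x y α β _ ⟨0, hs⟩)) (dd_PL_P0 (h := h) x y α β _)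
  exact dd_mono x y α β this (by omega)

lemma classify : ∀ v : GV h s ℓ,
    (∃ r, dd (h := h) x y α β v (P0 r) ≤ ((2^h : ℕ) : ℝ≥0∞)) ∨
    (∃ m, v = GV.t m) ∨ (∃ i, v = GV.a i) ∨ (∃ i, v = GV.b i) := by
  intro v
  cases v with
  | t m => exact Or.inr (Or.inl ⟨m, rfl⟩)
  | p r j => exact Or.inl ⟨r, R_p x y α β r j⟩
  | a i => exact Or.inr (Or.inr (Or.inl ⟨i, rfl⟩))
  | b i => exact Or.inr (Or.inr (Or.inr ⟨i, rfl⟩))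
  | ah z jj => exact Or.inl ⟨rowA z jj, R_ah (h := h) x y α β z jj⟩
  | bh z jj => exact Or.inl ⟨rowB z jj, R_bh (h := h) x y α β z jj⟩
  | as j => exact Or.inl ⟨rowS j, R_as (h := h) x y α β j⟩
  | bs j => exact Or.inl ⟨rowS j, R_bs (h := h) x y α β j⟩

lemma main1 (hs : 1 ≤ s) (hab : α ≤ β)
    (hF : ∀ i : Fin (2^s), ∃ j : Fin ℓ, x i j = true ∧ y i j = true) :
    ∀ u v : GV h s ℓ, dd (h := h) x y α β u v ≤
      ((max (2*α) β + (3 * 2^h + 3) : ℕ) : ℝ≥0∞) := by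
  have hml := le_max_left (2*α) β
  have hmr := le_max_right (2*α) β
  have hhp := Nat.lt_two_pow_self (n := h)
  have h1p := Nat.one_le_two_pow (n := h)
  intro u v
  rcases classify x y α β u with (⟨r, hu⟩ | ⟨m, rfl⟩ | ⟨i, rfl⟩ | ⟨i, rfl⟩) <;>
    rcases classify x y α β v with (⟨r', hv⟩ | ⟨m', rfl⟩ | ⟨i', rfl⟩ | ⟨i', rfl⟩)
  · have := chain x y α β (chain x y α β hu (E_cross (h := h) x y α β r r'))
      (dd_symm_le x y α β hv)
    exact dd_mono x y α β this (by omega)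
  · have := chain x y α β
      (chain x y α β hu (dd_symm_le x y α β (dd_root_P0 (h := h) x y α β r)))
      (dd_symm_le x y α β (dd_t_root x y α β m'))
    exact dd_mono x y α β this (by omega)
  · have := chain x y α β hu (dd_symm_le x y α β (S_a x y α β hs hab i' r))
    exact dd_mono x y α β this (by omega)
  · have := chain x y α β hu (dd_symm_le x y α β (S_b x y α β hs hab i' r))
    exact dd_mono x y α β this (by omega)
  · have := chain x y α β (chain x y α β (dd_t_root x y α β m)
      (dd_root_P0 (h := h) x y α β r')) (dd_symm_le x y α β hv)
    exact dd_mono x y α β this (by omega)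
  · have := chain x y α β (dd_t_root x y α β m)
      (dd_symm_le x y α β (dd_t_root x y α β m'))
    exact dd_mono x y α β this (by omega)
  · have := chain x y α β (chain x y α β (dd_t_root x y α β m)
      (dd_root_P0 (h := h) x y α β _)) (dd_symm_le x y α β (A_anchor x y α β hs i'))
    exact dd_mono x y α β this (by omega)
  · have := chain x y α β (chain x y α β (dd_t_root x y α β m)
      (dd_root_P0 (h := h) x y α β _)) (dd_symm_le x y α β (B_anchor x y α β hs i'))
    exact dd_mono x y α β this (by omega)
  · have := chain x y α β (S_a x y α β hs hab i r') (dd_symm_le x y α β hv)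
    exact dd_mono x y α β this (by omega)
  · have := chain x y α β (chain x y α β (A_anchor x y α β hs i)
      (dd_symm_le x y α β (dd_root_P0 (h := h) x y α β _)))
      (dd_symm_le x y α β (dd_t_root x y α β m'))
    exact dd_mono x y α β this (by omega)
  · exact dd_mono x y α β (E_aa x y α β i i') (by omega)
  · exact dd_mono x y α β (D_ab x y α β hF i i') (by omega)
  · have := chain x y α β (S_b x y α β hs hab i r') (dd_symm_le x y α β hv)
    exact dd_mono x y α β this (by omega)
  · have := chain x y α β (chain x y α β (B_anchor x y α β hs i)
      (dd_symm_le x y α β (dd_root_P0 (h := h) x y α β _)))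
      (dd_symm_le x y α β (dd_t_root x y α β m'))
    exact dd_mono x y α β this (by omega)
  · exact dd_mono x y α β (dd_symm_le x y α β (D_ab x y α β hF i' i)) (by omega)
  · exact dd_mono x y α β (E_bb x y α β i i') (by omega)

end S3

namespace S3
variable {h s ℓ : ℕ}

/-- `y i₀` evaluated at a raw index. -/
def yv (y : Fin (2^s) → Fin ℓ → Bool) (i₀ : Fin (2^s)) (t : ℕ) : Bool :=
  if ht : t < ℓ then y i₀ ⟨t, ht⟩ else false

/-- the potential function witnessing the lower bound. -/
def Phi (y : Fin (2^s) → Fin ℓ → Bool) (α β : ℕ) (i₀ : Fin (2^s)) : GV h s ℓ → ℕ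
  | .t _ => α
  | .p r _ =>
      if r.val < 2*s then
        (if i₀.val.testBit (r.val / 2) = decide (r.val % 2 = 1) then α
         else min (α+β) (3*α) - α)
      else (if yv y i₀ (r.val - 2*s) then min (α+β) (3*α) - α else α)
  | .a i => if i = i₀ then 0 else α
  | .b i => if i = i₀ then min (α+β) (3*α) else min (α+β) (3*α) - α
  | .ah z jj => if i₀.val.testBit jj.val = z then α else min (α+β) (3*α) - α
  | .bh z jj => if i₀.val.testBit jj.val = z then min (α+β) (3*α) - α else α
  | .as j => if y i₀ j then min (α+β) (3*α) - α else α
  | .bs j => if y i₀ j then min (α+β) (3*α) - α else α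

variable (x y : Fin (2^s) → Fin ℓ → Bool) (α β : ℕ)

lemma gW_symm : ∀ u v : GV h s ℓ, gadgetW x y α β u v = gadgetW x y α β v u := by
  intro u v; cases u <;> cases v <;> rfl

lemma Phi_edge (hα : 0 < α) (hab : α < β) (i₀ : Fin (2^s))
    (hbad : ∀ j, ¬(x i₀ j = true ∧ y i₀ j = true)) :
    ∀ u v : GV h s ℓ, gadgetAdj0 u v →
      Phi y α β i₀ v ≤ Phi y α β i₀ u + gadgetW x y α β u v ∧
      Phi y α β i₀ u ≤ Phi y α β i₀ v + gadgetW x y α β u v := by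
  have hm1 : min (α+β) (3*α) ≤ 3*α := min_le_right _ _
  have hm2 : 2*α ≤ min (α+β) (3*α) := le_min (by omega) (by omega)
  have hm3 : min (α+β) (3*α) ≤ α + β := min_le_left _ _
  intro u v hadj
  rcases u with m|⟨r,j⟩|i|i|⟨z,jj⟩|⟨z,jj⟩|j|j <;>
    rcases v with m'|⟨r',j'⟩|i'|i'|⟨z',jj'⟩|⟨z',jj'⟩|j'|j' <;>
    (try exact hadj.elim)
  -- t t
  · simp only [Phi, gadgetW]; omega
  -- t p
  · simp only [Phi, gadgetW]; split_ifs <;> omega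
  -- p p
  · obtain ⟨rfl, -⟩ := hadj
    simp only [Phi, gadgetW]; omega
  -- a a
  · simp only [Phi, gadgetW]; split_ifs <;> omega
  -- a ah
  · by_cases h1 : i = i₀
    · subst h1
      have hc : i.val.testBit jj'.val = z' := hadj.symm
      simp only [Phi, gadgetW]
      simp only [if_true]
      rw [if_pos hc]
      omega
    · simp only [Phi, gadgetW, if_neg h1]
      split_ifs <;> omega
  -- a as
  · by_cases h1 : i = i₀
    · subst h1
      simp only [Phi, gadgetW]
      simp only [if_true]
      by_cases hy : y i j'
      · have hx : x i j' = false := by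
          cases hx2 : x i j' with
          | false => rfl
          | true => exact absurd ⟨hx2, hy⟩ (hbad j')
        rw [if_pos hy, if_neg (by simp [hx])]
        omega
      · rw [if_neg hy]
        split_ifs <;> omega
    · simp only [Phi, gadgetW, if_neg h1]
      split_ifs <;> omega
  -- b b
  · simp only [Phi, gadgetW]; split_ifs <;> omega
  -- b bh
  · by_cases h1 : i = i₀
    · subst h1
      have hc : i.val.testBit jj'.val = z' := hadj.symm
      simp only [Phi, gadgetW]
      simp only [if_true]
      rw [if_pos hc]
      omega
    · simp only [Phi, gadgetW, if_neg h1]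
      split_ifs <;> omega
  -- b bs
  · by_cases h1 : i = i₀
    · subst h1
      simp only [Phi, gadgetW]
      simp only [if_true]
      by_cases hy : y i j'
      · rw [if_pos hy, if_pos hy]
        omega
      · rw [if_neg hy, if_neg hy]
        omega
    · simp only [Phi, gadgetW, if_neg h1]
      split_ifs <;> omega
  -- ah p
  · obtain ⟨h1, -⟩ := hadj
    have hjlt := jj.isLt
    simp only [Phi, gadgetW]
    cases z <;> simp at h1
    · have hr : r'.val < 2*s := by omega
      rw [if_pos hr]
      have e1 : r'.val / 2 = jj.val := by omega
      have e2 : r'.val % 2 = 0 := by omega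
      rw [e1, e2]
      cases htb : i₀.val.testBit jj.val <;> simp [htb]
    · have hr : r'.val < 2*s := by omega
      rw [if_pos hr]
      have e1 : r'.val / 2 = jj.val := by omega
      have e2 : r'.val % 2 = 1 := by omega
      rw [e1, e2]
      cases htb : i₀.val.testBit jj.val <;> simp [htb]
  -- bh p
  · obtain ⟨h1, -⟩ := hadj
    have hjlt := jj.isLt
    simp only [Phi, gadgetW]
    cases z <;> simp at h1
    · have hr : r'.val < 2*s := by omega
      rw [if_pos hr]
      have e1 : r'.val / 2 = jj.val := by omega
      have e2 : r'.val % 2 = 1 := by omega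
      rw [e1, e2]
      cases htb : i₀.val.testBit jj.val <;> simp [htb]
    · have hr : r'.val < 2*s := by omega
      rw [if_pos hr]
      have e1 : r'.val / 2 = jj.val := by omega
      have e2 : r'.val % 2 = 0 := by omega
      rw [e1, e2]
      cases htb : i₀.val.testBit jj.val <;> simp [htb]
  -- as p
  · obtain ⟨h1, -⟩ := hadj
    simp only [Phi, gadgetW]
    rw [if_neg (by omega)]
    have e1 : r'.val - 2*s = j.val := by omega
    rw [e1]
    have e2 : yv y i₀ j.val = y i₀ j := by
      rw [yv, dif_pos j.isLt]
    rw [e2]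
    omega
  -- bs p
  · obtain ⟨h1, -⟩ := hadj
    simp only [Phi, gadgetW]
    rw [if_neg (by omega)]
    have e1 : r'.val - 2*s = j.val := by omega
    rw [e1]
    have e2 : yv y i₀ j.val = y i₀ j := by
      rw [yv, dif_pos j.isLt]
    rw [e2]
    omega

end S3

namespace S3
variable {h s ℓ : ℕ} (x y : Fin (2^s) → Fin ℓ → Bool) (α β : ℕ)

lemma Phi_walk (hα : 0 < α) (hab : α < β) (i₀ : Fin (2^s))
    (hbad : ∀ j, ¬(x i₀ j = true ∧ y i₀ j = true)) {u v : GV h s ℓ}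
    (p : (gadget h s ℓ).Walk u v) :
    ((Phi y α β i₀ v : ℕ) : ℝ≥0∞) ≤
      ((Phi y α β i₀ u : ℕ) : ℝ≥0∞) + wlen (gadget h s ℓ) (Wc x y α β) p := by
  induction p with
  | nil => simp
  | @cons a b c hadj q ih =>
    rw [wlen_cons]
    have hedge : Phi y α β i₀ b ≤ Phi y α β i₀ a + gadgetW x y α β a b := by
      rcases (And.right hadj) with hA | hA
      · exact (Phi_edge x y α β hα hab i₀ hbad a b hA).1
      · have := (Phi_edge x y α β hα hab i₀ hbad b a hA).2
        rwa [gW_symm x y α β b a] at this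
    calc ((Phi y α β i₀ c : ℕ) : ℝ≥0∞)
        ≤ ((Phi y α β i₀ b : ℕ) : ℝ≥0∞) + wlen (gadget h s ℓ) (Wc x y α β) q := ih
      _ ≤ (((Phi y α β i₀ a + gadgetW x y α β a b : ℕ) : ℝ≥0∞)) +
            wlen (gadget h s ℓ) (Wc x y α β) q := by
          exact add_le_add_left (Nat.cast_le.mpr hedge) _
      _ = ((Phi y α β i₀ a : ℕ) : ℝ≥0∞) +
            (Wc x y α β a b + wlen (gadget h s ℓ) (Wc x y α β) q) := by
          rw [Wc]
          push_cast
          ring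

lemma main2 (hα : 0 < α) (hab : α < β) (i₀ : Fin (2^s))
    (hbad : ∀ j, ¬(x i₀ j = true ∧ y i₀ j = true)) :
    ((min (α+β) (3*α) : ℕ) : ℝ≥0∞) ≤ dd (h := h) x y α β (.a i₀) (.b i₀) := by
  refine le_iInf fun p => ?_
  have hw := Phi_walk x y α β hα hab i₀ hbad p
  have hPa : Phi (h := h) y α β i₀ (.a i₀) = 0 := by
    simp only [Phi, if_true]
  have hPb : Phi (h := h) y α β i₀ (.b i₀) = min (α+β) (3*α) := by
    simp only [Phi, if_true]
  rw [hPa, hPb] at hw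
  simpa using hw

lemma card_lb (hh : 1 ≤ h) (hs : 1 ≤ s) (hℓ : 1 ≤ ℓ) :
    3 * 2^h + 3 ≤ Fintype.card (GV h s ℓ) := by
  have hinj : Function.Injective
      (fun q : (Fin (2*s+ℓ) × Fin (2^h)) ⊕ Fin (2^(h+1)-1) => match q with
        | .inl (r, j) => (GV.p r j : GV h s ℓ)
        | .inr m => GV.t m) := by
    intro q q'
    rcases q with ⟨r, j⟩ | m <;> rcases q' with ⟨r', j'⟩ | m' <;> simp_all
  have hle := Fintype.card_le_of_injective _ hinj
  simp only [Fintype.card_sum, Fintype.card_prod, Fintype.card_fin] at hle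
  have h3 : 3 ≤ 2*s + ℓ := by omega
  have hmul : 3 * 2^h ≤ (2*s + ℓ) * 2^h := Nat.mul_le_mul_right _ h3
  have hp2 : (2:ℕ)^(h+1) = 2 * 2^h := by ring
  have h2h : 2 ≤ 2^h := by
    calc (2:ℕ) = 2^1 := rfl
    _ ≤ 2^h := Nat.pow_le_pow_right (by norm_num) hh
  omega

end S3

/-- For the diameter gadget `(G,w)`: if `F(x,y)=1` then
`D_{G,w} ≤ max{2α, β} + n`, and if `F(x,y)=0` then `D_{G,w} ≥ min{α+β, 3α}`,
where `n = |V|` and `F(x,y) = ⋀_i ⋁_j (x_{i,j} ∧ y_{i,j})`. -/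
theorem stmt3 (h s ℓ : ℕ) (hh : 1 ≤ h) (hs : 1 ≤ s) (hℓ : 1 ≤ ℓ)
    (α β : ℕ) (hα : 0 < α) (hαβ : α < β)
    (x y : Fin (2 ^ s) → Fin ℓ → Bool)
    (n : ℕ) (hn : n = Fintype.card (GV h s ℓ)) :
    ((∀ i : Fin (2 ^ s), ∃ j : Fin ℓ, x i j = true ∧ y i j = true) →
      wdiam (gadget h s ℓ) (fun u v => ((gadgetW x y α β u v : ℕ) : ℝ≥0∞)) ≤
        ((max (2 * α) β : ℕ) : ℝ≥0∞) + (n : ℝ≥0∞)) ∧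
    ((¬ ∀ i : Fin (2 ^ s), ∃ j : Fin ℓ, x i j = true ∧ y i j = true) →
      ((min (α + β) (3 * α) : ℕ) : ℝ≥0∞) ≤
        wdiam (gadget h s ℓ) (fun u v => ((gadgetW x y α β u v : ℕ) : ℝ≥0∞))) := by
  
  constructor
  · intro hF
    have hb := S3.main1 (h := h) x y α β hs (le_of_lt hαβ) hF
    refine wdiam_le _ _ _ (fun u v => le_trans (hb u v) ?_)
    rw [hn]
    have hcard := S3.card_lb (h := h) (s := s) (ℓ := ℓ) hh hs hℓ
    have hle : (max (2*α) β + (3 * 2^h + 3) : ℕ) ≤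
        max (2*α) β + Fintype.card (GV h s ℓ) := by omega
    refine le_trans (Nat.cast_le.mpr hle) ?_
    rw [Nat.cast_add]
  · intro hnF
    obtain ⟨i₀, hbad0⟩ := not_forall.mp hnF
    have hbad : ∀ j, ¬(x i₀ j = true ∧ y i₀ j = true) := fun j hj => hbad0 ⟨j, hj⟩
    refine le_trans (S3.main2 (h := h) x y α β hα hαβ i₀ hbad) ?_
    exact le_wdiam _ _ _ _
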